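/- Let δ be an ordinal and ⟨ℬ_γ : γ ≤ δ⟩ a family of complete Boolean algebras equipped with a commuting system of injective Boolean-algebra homomorphisms e_{β,γ} : ℬ_β → ℬ_γ for β ≤ γ ≤ δ (with e_{γ,γ} the identity), such that: each successor-step embedding e_{γ,γ+1} preserves arbitrary suprema; and for each limit ordinal γ ≤ δ the union ⋃_{β<γ} e_{β,γ}[ℬ_β] is dense in ℬ_γ (every nonzero element of ℬ_γ lies above a nonzero element of this union). Then: (1) for all β < γ ≤ δ the embedding e_{β,γ} preserves arbitrary suprema; and (2) if for every β < γ (γ ≤ δ a limit ordinal) an ultrafilter D_β on ℬ_β is given with e_{β,β'}[D_β] ⊆ D_{β'} for all β ≤ β' < γ, then the set ⋃_{β<γ} e_{β,γ}[D_β] has the finite intersection property in ℬ_γ and hence extends to an ultrafilter on ℬ_γ. -/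

import Mathlib

universe u v

def IsUltrafilterOn {B : Type v} [CompleteBooleanAlgebra B] (D : Set B) : Prop :=
  ⊥ ∉ D ∧ (∀ a ∈ D, ∀ b : B, a ≤ b → b ∈ D) ∧
    (∀ a ∈ D, ∀ b ∈ D, a ⊓ b ∈ D) ∧ ∀ a : B, a ∈ D ∨ aᶜ ∈ D

theorem exists_ultrafilter_extending {B : Type v} [CompleteBooleanAlgebra B] (S : Set B)
    (hS : ∀ F : Finset B, ↑F ⊆ S → F.inf id ≠ ⊥) :
    ∃ D : Set B, IsUltrafilterOn D ∧ S ⊆ D := by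
  classical
  set G : Set B := {b | ∃ F : Finset B, ↑F ⊆ S ∧ F.inf id ≤ b} with hG
  have hSG : S ⊆ G := fun s hs => ⟨{s}, by simpa using hs, by simp⟩
  set C : Set (Set B) := {F | ⊥ ∉ F ∧ (∀ a ∈ F, ∀ b, a ≤ b → b ∈ F) ∧
    (∀ a ∈ F, ∀ b ∈ F, a ⊓ b ∈ F) ∧ G ⊆ F} with hC
  have hGC : G ∈ C := by
    refine ⟨?_, ?_, ?_, subset_rfl⟩
    · rintro ⟨F, hF, hle⟩; exact hS F hF (le_bot_iff.mp hle)
    · rintro a ⟨F, hF, hle⟩ b hab; exact ⟨F, hF, hle.trans hab⟩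
    · rintro a ⟨F, hF, hle⟩ b ⟨F', hF', hle'⟩
      refine ⟨F ∪ F', ?_, ?_⟩
      · push_cast; exact Set.union_subset hF hF'
      · rw [Finset.inf_union]; exact inf_le_inf hle hle'
  have hch : ∀ c ⊆ C, IsChain (· ⊆ ·) c → c.Nonempty → ∃ ub ∈ C, ∀ s ∈ c, s ⊆ ub := by
    intro c hcC hchain hcne
    refine ⟨⋃₀ c, ⟨?_, ?_, ?_, ?_⟩, fun s hs => Set.subset_sUnion_of_mem hs⟩
    · rintro ⟨F, hF, hbF⟩; exact (hcC hF).1 hbF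
    · rintro a ⟨F, hF, haF⟩ b hab; exact ⟨F, hF, (hcC hF).2.1 a haF b hab⟩
    · rintro a ⟨F, hF, haF⟩ b ⟨F', hF', hbF'⟩
      rcases hchain.total hF hF' with h | h
      · exact ⟨F', hF', (hcC hF').2.2.1 a (h haF) b hbF'⟩
      · exact ⟨F, hF, (hcC hF).2.2.1 a haF b (h hbF')⟩
    · obtain ⟨F, hF⟩ := hcne
      exact (hcC hF).2.2.2.trans (Set.subset_sUnion_of_mem hF)
  obtain ⟨M, hGM, hmax⟩ := zorn_subset_nonempty C hch G hGC
  have hMC : M ∈ C := hmax.prop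
  have htop : ⊤ ∈ M := hMC.2.2.2 ⟨∅, by simp, by simp⟩
  have key : ∀ a : B, (∀ f ∈ M, f ⊓ a ≠ ⊥) → a ∈ M := by
    intro a ha
    set M' : Set B := {b | ∃ f ∈ M, f ⊓ a ≤ b} with hM'
    have hMM' : M ⊆ M' := fun b hb => ⟨b, hb, inf_le_left⟩
    have hM'C : M' ∈ C := by
      refine ⟨?_, ?_, ?_, hMC.2.2.2.trans hMM'⟩
      · rintro ⟨f, hf, hle⟩; exact ha f hf (le_bot_iff.mp hle)
      · rintro x ⟨f, hf, hle⟩ b hxb; exact ⟨f, hf, hle.trans hxb⟩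
      · rintro x ⟨f, hf, hle⟩ y ⟨g, hg, hle'⟩
        refine ⟨f ⊓ g, hMC.2.2.1 f hf g hg, le_inf ?_ ?_⟩
        · exact le_trans (by gcongr; exact inf_le_left) hle
        · exact le_trans (by gcongr; exact inf_le_right) hle'
    have : M' = M := le_antisymm (hmax.2 hM'C hMM') hMM'
    rw [← this]; exact ⟨⊤, htop, by simp⟩
  refine ⟨M, ⟨hMC.1, hMC.2.1, hMC.2.2.1, ?_⟩, hSG.trans hMC.2.2.2⟩
  intro a
  by_contra h
  push_neg at h
  have h1 : ∃ f ∈ M, f ⊓ a = ⊥ := by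
    by_contra hh; push_neg at hh; exact h.1 (key a hh)
  have h2 : ∃ g ∈ M, g ⊓ aᶜ = ⊥ := by
    by_contra hh; push_neg at hh; exact h.2 (key aᶜ hh)
  obtain ⟨f, hf, hfa⟩ := h1
  obtain ⟨g, hg, hga⟩ := h2
  have hfg : f ⊓ g = ⊥ := by
    have h3 : f ⊓ g = (f ⊓ g ⊓ a) ⊔ (f ⊓ g ⊓ aᶜ) := by
      rw [← inf_sup_left, sup_compl_eq_top, inf_top_eq]
    rw [h3, le_bot_iff.symm]
    apply sup_le
    · exact le_trans (inf_le_inf_right a inf_le_left) hfa.le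
    · exact le_trans (inf_le_inf_right aᶜ inf_le_right) hga.le
  exact hMC.1 (hfg ▸ hMC.2.2.1 f hf g hg)

theorem embedding_sequence_sSup_and_ultrafilter
    (δ : Ordinal.{u}) (B : Ordinal.{u} → Type v)
    [inst : ∀ γ, CompleteBooleanAlgebra (B γ)]
    (e : ∀ β γ : Ordinal.{u}, β ≤ γ → B β → B γ)
    (hid : ∀ γ ≤ δ, ∀ b : B γ, e γ γ le_rfl b = b)
    (hcomp : ∀ (β γ η : Ordinal.{u}) (h1 : β ≤ γ) (h2 : γ ≤ η), η ≤ δ →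
      ∀ b : B β, e γ η h2 (e β γ h1 b) = e β η (h1.trans h2) b)
    (hinj : ∀ (β γ : Ordinal.{u}) (h : β ≤ γ), γ ≤ δ →
      Function.Injective (e β γ h))
    (hbot : ∀ (β γ : Ordinal.{u}) (h : β ≤ γ), γ ≤ δ → e β γ h ⊥ = ⊥)
    (hcompl : ∀ (β γ : Ordinal.{u}) (h : β ≤ γ), γ ≤ δ →
      ∀ a : B β, e β γ h aᶜ = (e β γ h a)ᶜ)
    (hinf : ∀ (β γ : Ordinal.{u}) (h : β ≤ γ), γ ≤ δ →
      ∀ a b : B β, e β γ h (a ⊓ b) = e β γ h a ⊓ e β γ h b)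
    (hsucc : ∀ γ : Ordinal.{u}, γ + 1 ≤ δ → ∀ T : Set (B γ),
      e γ (γ + 1) (le_self_add (a := γ) (b := 1)) (sSup T) =
        sSup (e γ (γ + 1) (le_self_add (a := γ) (b := 1)) '' T))
    (hdense : ∀ γ ≤ δ, Order.IsSuccLimit γ → ∀ b : B γ, b ≠ ⊥ →
      ∃ β : Ordinal.{u}, ∃ hβ : β < γ, ∃ a : B β, a ≠ ⊥ ∧ e β γ hβ.le a ≤ b) :
    (∀ (β γ : Ordinal.{u}) (h : β < γ), γ ≤ δ → ∀ T : Set (B β),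
      e β γ h.le (sSup T) = sSup (e β γ h.le '' T)) ∧
    (∀ γ ≤ δ, Order.IsSuccLimit γ → ∀ D : ∀ β : Ordinal.{u}, Set (B β),
      (∀ β < γ, IsUltrafilterOn (D β)) →
      (∀ (β β' : Ordinal.{u}) (h : β ≤ β'), β' < γ →
        ∀ a ∈ D β, e β β' h a ∈ D β') →
      (∀ F : Finset (B γ),
        (↑F : Set (B γ)) ⊆ (⋃ β : Ordinal.{u}, ⋃ h : β < γ, e β γ h.le '' D β) →
        F.inf id ≠ ⊥) ∧
      ∃ Dγ : Set (B γ), IsUltrafilterOn Dγ ∧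
        (⋃ β : Ordinal.{u}, ⋃ h : β < γ, e β γ h.le '' D β) ⊆ Dγ) := by
  classical
  have hmono : ∀ (β γ : Ordinal.{u}) (h : β ≤ γ), γ ≤ δ → ∀ a b : B β, a ≤ b →
      e β γ h a ≤ e β γ h b := by
    intro β γ h hδ a b hab
    have h1 : e β γ h (a ⊓ b) = e β γ h a := by rw [inf_eq_left.mpr hab]
    rw [← h1, hinf β γ h hδ]; exact inf_le_right
  have hcancel : ∀ (β γ : Ordinal.{u}) (h : β ≤ γ), γ ≤ δ → ∀ a b : B β,
      e β γ h a ≤ e β γ h b → a ≤ b := by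
    intro β γ h hδ a b hab
    have h1 : e β γ h (a ⊓ b) = e β γ h a := by
      rw [hinf β γ h hδ, inf_eq_left.mpr hab]
    exact inf_eq_left.mp (hinj β γ h hδ h1)
  have hne : ∀ (β γ : Ordinal.{u}) (h : β ≤ γ), γ ≤ δ → ∀ a : B β, a ≠ ⊥ →
      e β γ h a ≠ ⊥ := by
    intro β γ h hδ a ha hea
    exact ha (hinj β γ h hδ (hea.trans (hbot β γ h hδ).symm))
  have key : ∀ γ : Ordinal.{u}, γ ≤ δ → ∀ β (h : β ≤ γ) (T : Set (B β)),
      e β γ h (sSup T) = sSup (e β γ h '' T) := by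
    intro γ
    induction γ using Ordinal.induction with
    | h γ IH =>
      intro hγδ β hβγ T
      rcases eq_or_lt_of_le hβγ with rfl | hlt
      · rw [hid β hγδ]
        congr 1
        rw [Set.image_congr (fun a _ => hid β hγδ a)]
        simp
      rcases Ordinal.zero_or_succ_or_isSuccLimit γ with rfl | ⟨η, hγeq⟩ | hγlim
      · exact absurd hlt (not_lt_of_ge (zero_le (a := β)))
      · -- successor case
        have hγeq' : γ = η + 1 := by rw [Ordinal.add_one_eq_succ]; exact hγeq.symm
        subst hγeq'
        have hη : η < η + 1 := by
          rw [Ordinal.add_one_eq_succ]; exact Order.lt_succ η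
        have hηδ : η ≤ δ := hη.le.trans hγδ
        have hβη : β ≤ η := by
          have := hlt
          rw [Ordinal.add_one_eq_succ] at this
          exact Order.lt_succ_iff.mp this
        have h1 : ∀ b : B β, e η (η + 1) (le_self_add (a := η) (b := 1)) (e β η hβη b) =
            e β (η + 1) hβγ b := fun b => hcomp β η (η + 1) hβη _ hγδ b
        calc e β (η + 1) hβγ (sSup T)
            = e η (η + 1) (le_self_add (a := η) (b := 1)) (e β η hβη (sSup T)) := (h1 _).symm
          _ = e η (η + 1) (le_self_add (a := η) (b := 1)) (sSup (e β η hβη '' T)) := by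
              rw [IH η hη hηδ β hβη T]
          _ = sSup (e η (η + 1) (le_self_add (a := η) (b := 1)) '' (e β η hβη '' T)) :=
              hsucc η hγδ _
          _ = sSup (e β (η + 1) hβγ '' T) := by
              rw [← Set.image_comp]
              congr 1
              exact Set.image_congr fun b _ => h1 b
      · -- limit case
        have hge : sSup (e β γ hβγ '' T) ≤ e β γ hβγ (sSup T) := by
          apply sSup_le
          rintro x ⟨t, ht, rfl⟩
          exact hmono β γ hβγ hγδ t (sSup T) (le_sSup ht)
        refine le_antisymm ?_ hge
        by_contra hnot
        set s := sSup (e β γ hβγ '' T) with hs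
        have hc : e β γ hβγ (sSup T) ⊓ sᶜ ≠ ⊥ := by
          intro hceq
          apply hnot
          have h2 : e β γ hβγ (sSup T) = e β γ hβγ (sSup T) ⊓ (s ⊔ sᶜ) := by
            rw [sup_compl_eq_top, inf_top_eq]
          rw [h2, inf_sup_left, hceq, sup_bot_eq]
          exact inf_le_right
        obtain ⟨α, hαγ, a, ha, hle⟩ := hdense γ hγδ hγlim _ hc
        have hηγ : max β α < γ := max_lt hlt hαγ
        have hηδ : max β α ≤ δ := hηγ.le.trans hγδ
        set a' := e α (max β α) (le_max_right β α) a with ha'def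
        have ha' : a' ≠ ⊥ := hne α (max β α) _ hηδ a ha
        have hea' : e (max β α) γ hηγ.le a' = e α γ hαγ.le a :=
          hcomp α (max β α) γ _ _ hγδ a
        have h2 : e (max β α) γ hηγ.le a' ≤
            e (max β α) γ hηγ.le (e β (max β α) (le_max_left β α) (sSup T)) := by
          rw [hea', hcomp β (max β α) γ _ _ hγδ]
          exact hle.trans inf_le_left
        have h3 : a' ≤ e β (max β α) (le_max_left β α) (sSup T) :=
          hcancel (max β α) γ _ hγδ _ _ h2
        rw [IH (max β α) hηγ hηδ β (le_max_left β α) T] at h3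
        have h5 : ∃ t ∈ T, a' ⊓ e β (max β α) (le_max_left β α) t ≠ ⊥ := by
          by_contra hh
          push_neg at hh
          apply ha'
          have h6 : a' ⊓ sSup (e β (max β α) (le_max_left β α) '' T) = ⊥ := by
            rw [inf_sSup_eq]
            refine le_bot_iff.mp (iSup₂_le ?_)
            rintro b ⟨t, ht, rfl⟩
            exact (hh t ht).le
          rw [← inf_eq_left.mpr h3, h6]
        obtain ⟨t, ht, hta⟩ := h5
        apply hne (max β α) γ hηγ.le hγδ _ hta
        have h7 : e (max β α) γ hηγ.le (a' ⊓ e β (max β α) (le_max_left β α) t) ≤ s ⊓ sᶜ := by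
          rw [hinf (max β α) γ hηγ.le hγδ]
          apply le_inf
          · refine le_trans inf_le_right ?_
            rw [hcomp β (max β α) γ _ _ hγδ]
            exact le_sSup ⟨t, ht, rfl⟩
          · refine le_trans inf_le_left ?_
            rw [hea']
            exact hle.trans inf_le_right
        rw [inf_compl_eq_bot] at h7
        exact le_bot_iff.mp h7
  refine ⟨fun β γ h hγδ T => key γ hγδ β h.le T, ?_⟩
  intro γ hγδ hγlim D hD hDc
  set S := ⋃ β : Ordinal.{u}, ⋃ h : β < γ, e β γ h.le '' D β with hSdef
  have htopD : ∀ β, β < γ → ⊤ ∈ D β := by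
    intro β h
    rcases (hD β h).2.2.2 ⊤ with ht | ht
    · exact ht
    · rw [compl_top] at ht
      exact absurd ht (hD β h).1
  have hrep : ∀ F : Finset (B γ), (↑F : Set (B γ)) ⊆ S →
      ∃ η, ∃ hη : η < γ, ∃ d ∈ D η, F.inf id = e η γ hη.le d := by
    intro F
    induction F using Finset.induction_on with
    | empty =>
      intro _
      refine ⟨0, hγlim.pos, ⊤, htopD 0 hγlim.pos, ?_⟩
      have he : e 0 γ hγlim.pos.le ⊤ = ⊤ := by
        have h1 := hcompl 0 γ hγlim.pos.le hγδ ⊥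
        rw [hbot 0 γ _ hγδ, compl_bot, compl_bot] at h1
        exact h1
      rw [he, Finset.inf_empty]
    | @insert x F hnx IHf =>
      intro hsub
      have hxS : x ∈ S := hsub (by simp)
      obtain ⟨η, hη, d, hd, hFd⟩ :=
        IHf ((Finset.coe_subset.mpr (Finset.subset_insert x F)).trans hsub)
      rw [hSdef] at hxS
      simp only [Set.mem_iUnion, Set.mem_image] at hxS
      obtain ⟨β, hβ, a, ha, hax⟩ := hxS
      have hμ : max β η < γ := max_lt hβ hη
      refine ⟨max β η, hμ,
        e β (max β η) (le_max_left β η) a ⊓ e η (max β η) (le_max_right β η) d,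
        (hD _ hμ).2.2.1 _ (hDc β _ _ hμ a ha) _ (hDc η _ _ hμ d hd), ?_⟩
      rw [Finset.inf_insert, hinf _ γ hμ.le hγδ, hcomp β _ γ _ _ hγδ,
        hcomp η _ γ _ _ hγδ, ← hFd, hax]
      rfl
  have hfip : ∀ F : Finset (B γ), (↑F : Set (B γ)) ⊆ S → F.inf id ≠ ⊥ := by
    intro F hF
    obtain ⟨η, hη, d, hd, hFd⟩ := hrep F hF
    rw [hFd]
    exact hne η γ hη.le hγδ d fun hbd => (hD η hη).1 (hbd ▸ hd)
  exact ⟨hfip, exists_ultrafilter_extending S hfip⟩
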